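/- Let d ≥ 1 and let f : [0,1]^d → ℝ be a non-constant continuous function, and let a ∈ ℝ satisfy min_{x∈[0,1]^d} f(x) < a < max_{x∈[0,1]^d} f(x). Then there exists κ > 0 such that for every ε > 0 the ε-packing number of the level set {f = a} satisfies N({f = a}, ε) ≥ κ·(1/ε)^{d−1}. -/

import Mathlib

noncomputable section

/-- The unit hypercube `[0,1]^d`, as a subset of `Fin d → ℝ` (equipped with the sup-norm). -/
def unitCube (d : ℕ) : Set (Fin d → ℝ) := Set.Icc 0 1

/-- The `r`-packing number of `E ⊆ [0,1]^d` with respect to the sup-norm: the largest `k`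
such that there exist `k` points of `E` that are pairwise more than `r` apart. -/
noncomputable def packingNumber {d : ℕ} (E : Set (Fin d → ℝ)) (r : ℝ) : ℕ :=
  sSup {k : ℕ | ∃ x : Fin k → (Fin d → ℝ), (∀ i, x i ∈ E) ∧
    ∀ i j, i ≠ j → r < dist (x i) (x j)}

lemma interior_point {d : ℕ} {f : (Fin d → ℝ) → ℝ} {a : ℝ}
    (hcont : ContinuousOn f (unitCube d)) {p₀ : Fin d → ℝ} (hp₀ : p₀ ∈ unitCube d)
    (hfa : f p₀ < a) :
    ∃ p r, 0 < r ∧ ∀ x : Fin d → ℝ, dist x p ≤ r → x ∈ unitCube d ∧ f x < a := by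
  classical
  set m : Fin d → ℝ := fun _ => (1/2 : ℝ) with hm
  set γ : ℝ → (Fin d → ℝ) := fun θ => p₀ + θ • (m - p₀) with hγ
  have hγ0 : γ 0 = p₀ := by simp [hγ]
  have hγmem : ∀ θ ∈ Set.Icc (0:ℝ) 1, γ θ ∈ unitCube d := by
    intro θ hθ
    have h2 := Set.mem_Icc.mp hp₀
    have h1 : ∀ i, 0 ≤ p₀ i ∧ p₀ i ≤ 1 :=
      fun i => ⟨by simpa using h2.1 i, by simpa using h2.2 i⟩
    constructor <;> intro i <;>
      simp only [hγ, Pi.add_apply, Pi.smul_apply, Pi.sub_apply, smul_eq_mul,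
        Pi.zero_apply, Pi.one_apply, hm]
    · nlinarith [mul_nonneg (by linarith [hθ.2] : (0:ℝ) ≤ 1 - θ) ((h1 i).1), hθ.1]
    · nlinarith [mul_nonneg (by linarith [hθ.2] : (0:ℝ) ≤ 1 - θ)
        (by linarith [(h1 i).2] : (0:ℝ) ≤ 1 - p₀ i), hθ.1, hθ.2]
  have hγc : Continuous γ := by continuity
  have htend : Filter.Tendsto (fun θ => f (γ θ)) (nhdsWithin 0 (Set.Ioc (0:ℝ) 1)) (nhds (f p₀)) := by
    have h1 : ContinuousWithinAt f (unitCube d) p₀ := hcont p₀ hp₀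
    have h2 : Filter.Tendsto γ (nhdsWithin 0 (Set.Ioc (0:ℝ) 1)) (nhdsWithin p₀ (unitCube d)) := by
      rw [show p₀ = γ 0 from hγ0.symm]
      apply Filter.Tendsto.mono_left _ (nhdsWithin_mono _ Set.Ioc_subset_Icc_self)
      exact (hγc.continuousWithinAt).tendsto_nhdsWithin
        (fun θ hθ => hγmem θ hθ)
    exact h1.tendsto.comp h2
  have hne : (nhdsWithin (0:ℝ) (Set.Ioc (0:ℝ) 1)).NeBot := by
    rw [nhdsWithin_Ioc_eq_nhdsGT (by norm_num : (0:ℝ) < 1)]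
    infer_instance
  have hev : ∀ᶠ θ in nhdsWithin (0:ℝ) (Set.Ioc (0:ℝ) 1), f (γ θ) < a :=
    htend (Iio_mem_nhds hfa)
  obtain ⟨θ, hθfa, hθmem⟩ := (hev.and (eventually_mem_nhdsWithin)).exists
  set p := γ θ with hp
  have hpmem : p ∈ unitCube d := hγmem θ (Set.Ioc_subset_Icc_self hθmem)
  -- closed ball of radius θ/2 around p is in unitCube
  have hball : ∀ x : Fin d → ℝ, dist x p ≤ θ/2 → x ∈ unitCube d := by
    intro x hx
    have h2 := Set.mem_Icc.mp hp₀
    have h1 : ∀ i, 0 ≤ p₀ i ∧ p₀ i ≤ 1 :=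
      fun i => ⟨by simpa using h2.1 i, by simpa using h2.2 i⟩
    have hθ0 := hθmem.1
    have hθ1 := hθmem.2
    constructor <;> intro i
    · have hxi : |x i - p i| ≤ θ/2 := by
        calc |x i - p i| = dist (x i) (p i) := by rw [Real.dist_eq]
        _ ≤ dist x p := dist_le_pi_dist x p i
        _ ≤ θ/2 := hx
      have : p i = (1-θ) * p₀ i + θ/2 := by
        simp [hp, hγ, hm, Pi.add_apply]; ring
      have := abs_le.mp hxi
      simp only [Pi.zero_apply]
      nlinarith [mul_nonneg (by linarith : (0:ℝ) ≤ 1 - θ) ((h1 i).1), hθ0]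
    · have hxi : |x i - p i| ≤ θ/2 := by
        calc |x i - p i| = dist (x i) (p i) := by rw [Real.dist_eq]
        _ ≤ dist x p := dist_le_pi_dist x p i
        _ ≤ θ/2 := hx
      have : p i = (1-θ) * p₀ i + θ/2 := by
        simp [hp, hγ, hm, Pi.add_apply]; ring
      have := abs_le.mp hxi
      simp only [Pi.one_apply]
      nlinarith [mul_nonneg (by linarith : (0:ℝ) ≤ 1 - θ)
        (by linarith [(h1 i).2] : (0:ℝ) ≤ 1 - p₀ i), hθ1]
  -- small ball where f < a
  have h1 : ContinuousWithinAt f (unitCube d) p := hcont p hpmem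
  have hev2 : ∀ᶠ x in nhdsWithin p (unitCube d), f x < a := h1.tendsto (Iio_mem_nhds hθfa)
  obtain ⟨r₁, hr₁, hr₁sub⟩ := Metric.mem_nhdsWithin_iff.mp hev2
  refine ⟨p, min (θ/2) (r₁/2), lt_min (by linarith [hθmem.1]) (by linarith), fun x hx => ?_⟩
  have hxc : x ∈ unitCube d := hball x (hx.trans (min_le_left _ _))
  refine ⟨hxc, hr₁sub ⟨?_, hxc⟩⟩
  exact Metric.mem_ball.mpr (lt_of_le_of_lt (hx.trans (min_le_right _ _)) (by linarith))

lemma packing_bddAbove {d : ℕ} {E : Set (Fin d → ℝ)} (hE : E ⊆ unitCube d) {r : ℝ} (hr : 0 < r) :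
    BddAbove {k : ℕ | ∃ x : Fin k → (Fin d → ℝ), (∀ i, x i ∈ E) ∧
      ∀ i j, i ≠ j → r < dist (x i) (x j)} := by
  classical
  have htb : TotallyBounded (unitCube d) := (isCompact_Icc).totallyBounded
  obtain ⟨t, htfin, hcov⟩ := Metric.totallyBounded_iff.mp htb (r/2) (by positivity)
  refine ⟨htfin.toFinset.card, fun k hk => ?_⟩
  obtain ⟨x, hxE, hxsep⟩ := hk
  have hchoice : ∀ i : Fin k, ∃ y ∈ htfin.toFinset, x i ∈ Metric.ball y (r/2) := by
    intro i
    have := hcov (hE (hxE i))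
    simp only [Set.mem_iUnion] at this
    obtain ⟨y, hy, hball⟩ := this
    exact ⟨y, htfin.mem_toFinset.mpr hy, hball⟩
  choose y hyt hyball using hchoice
  have hinj : Function.Injective (fun i : Fin k => (⟨y i, hyt i⟩ : {z // z ∈ htfin.toFinset})) := by
    intro i j hij
    by_contra hne
    have h1 : dist (x i) (x j) < r := by
      have hd1 : dist (x i) (y i) < r/2 := Metric.mem_ball.mp (hyball i)
      have hd2 : dist (x j) (y j) < r/2 := Metric.mem_ball.mp (hyball j)
      have : y i = y j := congrArg Subtype.val hij
      calc dist (x i) (x j) ≤ dist (x i) (y i) + dist (y j) (x j) := by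
            rw [this]; exact dist_triangle _ _ _
      _ < r := by rw [dist_comm (y j)]; linarith
    exact absurd (hxsep i j hne) (not_lt.mpr h1.le)
  calc k = Fintype.card (Fin k) := (Fintype.card_fin k).symm
  _ ≤ Fintype.card {z // z ∈ htfin.toFinset} := Fintype.card_le_of_injective _ hinj
  _ = htfin.toFinset.card := Fintype.card_coe _

lemma nat_cast_sep {m n : ℕ} (h : m ≠ n) : (1:ℝ) ≤ |(m:ℝ) - n| := by
  have h0 : ((m:ℤ) - n) ≠ 0 := sub_ne_zero.mpr (by exact_mod_cast h)
  have h1 : (1:ℤ) ≤ |(m:ℤ) - n| := Int.one_le_abs h0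
  calc (1:ℝ) ≤ ((|(m:ℤ) - n| : ℤ) : ℝ) := by exact_mod_cast h1
  _ = |(m:ℝ) - n| := by push_cast; ring_nf

lemma sep_calc {ε c B s u D : ℝ} (hε : 0 < ε) (hc : 0 < c) (hB : 0 < B) (hcB : c ≤ B)
    (hsc : s * c = 3 * B * ε) (h1 : |u| * c ≤ D) (h2 : s - |u| * B ≤ D) : ε < D := by
  rcases le_or_gt s (2 * |u| * B) with hcase | hcase
  · have h3 : s * c ≤ 2 * |u| * B * c := mul_le_mul_of_nonneg_right hcase hc.le
    have h4 : 3 * ε ≤ 2 * (|u| * c) := by nlinarith [abs_nonneg u]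
    nlinarith [abs_nonneg u]
  · have h3 : 3 * ε ≤ s := by nlinarith [mul_le_mul_of_nonneg_right hcB (by linarith : (0:ℝ) ≤ 3 * ε)]
    nlinarith [abs_nonneg u, mul_nonneg (abs_nonneg u) hB.le]

/-- If `f` is a non-constant continuous function on `[0,1]^d` and
`min f < a < max f`, then there is `κ > 0` such that for all `ε > 0` the `ε`-packing number
of the level set `{f = a}` is at least `κ (1/ε)^(d-1)`. -/
theorem stmt0 (d : ℕ) (hd : 1 ≤ d) (f : (Fin d → ℝ) → ℝ) (a : ℝ)
    (hcont : ContinuousOn f (unitCube d))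
    (hnonconst : ∃ x ∈ unitCube d, ∃ y ∈ unitCube d, f x ≠ f y)
    (hlow : ∃ x ∈ unitCube d, f x < a)
    (hhigh : ∃ x ∈ unitCube d, a < f x) :
    ∃ κ : ℝ, 0 < κ ∧ ∀ ε : ℝ, 0 < ε →
      κ * (1 / ε) ^ (d - 1) ≤ (packingNumber {x ∈ unitCube d | f x = a} ε : ℝ) := by
  classical
  obtain ⟨d', rfl⟩ : ∃ d', d = d' + 1 := ⟨d - 1, (Nat.succ_pred_eq_of_pos hd).symm⟩
  simp only [Nat.add_sub_cancel]
  obtain ⟨p₀, hp₀, hfp₀⟩ := hlow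
  obtain ⟨q₀, hq₀, hfq₀⟩ := hhigh
  obtain ⟨p, rp, hrp, hp⟩ := interior_point hcont hp₀ hfp₀
  obtain ⟨q, rq, hrq, hq⟩ := interior_point (f := fun x => -f x) (a := -a)
    (hcont.neg) hq₀ (by simpa using hfq₀)
  have hpself := hp p (by simp [hrp.le])
  have hqself := hq q (by simp [hrq.le])
  have hfp : f p < a := hpself.2
  have hfq : a < f q := by have := hqself.2; simpa using this
  have hpq : p ≠ q := by rintro rfl; linarith
  obtain ⟨k, hk⟩ : ∃ k, p k ≠ q k := Function.ne_iff.mp hpq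
  set δ : ℝ := min rp rq with hδdef
  have hδ : 0 < δ := lt_min hrp hrq
  set c : ℝ := |q k - p k| with hcdef
  have hc : 0 < c := abs_pos.mpr (sub_ne_zero.mpr (Ne.symm hk))
  set B : ℝ := dist p q with hBdef
  have hB : 0 < B := dist_pos.mpr hpq
  have hcB : c ≤ B := by
    have h1 : dist (q k) (p k) ≤ dist q p := dist_le_pi_dist q p k
    rw [Real.dist_eq] at h1
    rw [hcdef, hBdef, dist_comm]
    exact h1
  refine ⟨(δ * c / (3 * B)) ^ d', by positivity, ?_⟩
  intro ε hε
  set s : ℝ := 3 * B * ε / c with hsdef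
  have hs : 0 < s := by positivity
  have hsc : s * c = 3 * B * ε := by rw [hsdef]; exact div_mul_cancel₀ _ hc.ne'
  set M : ℕ := ⌊δ / s⌋₊ + 1 with hMdef
  have hM1 : s * ((M:ℝ) - 1) ≤ δ := by
    have h1 : (⌊δ / s⌋₊ : ℝ) ≤ δ / s := Nat.floor_le (by positivity)
    have h2 : ((M:ℝ) - 1) = (⌊δ / s⌋₊ : ℝ) := by push_cast [hMdef]; ring
    rw [h2]
    calc s * (⌊δ / s⌋₊ : ℝ) ≤ s * (δ / s) := by
          exact mul_le_mul_of_nonneg_left h1 hs.le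
    _ = δ := by field_simp
  have harith : (δ * c / (3 * B)) ^ d' * (1/ε) ^ d' ≤ (M:ℝ) ^ d' := by
    have h1 : δ * c / (3 * B) * (1/ε) = δ / s := by
      rw [hsdef]; field_simp
    rw [← mul_pow, h1]
    have h2 : δ / s ≤ (M:ℝ) := by
      calc δ / s ≤ (⌊δ / s⌋₊ : ℝ) + 1 := (Nat.lt_floor_add_one _).le
      _ = (M:ℝ) := by push_cast [hMdef]; ring
    exact pow_le_pow_left₀ (div_nonneg hδ.le hs.le) h2 d'
  -- the shifts
  set w : (Fin d' → Fin M) → (Fin (d'+1) → ℝ) :=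
    fun v => k.insertNth 0 (fun i => s * ((v i : ℕ) : ℝ)) with hwdef
  have hwk : ∀ v, w v k = 0 := fun v => Fin.insertNth_apply_same k 0 _
  have hws : ∀ v i, w v (k.succAbove i) = s * ((v i : ℕ) : ℝ) :=
    fun v i => Fin.insertNth_apply_succAbove k 0 _ i
  have hwnorm : ∀ v, ‖w v‖ ≤ δ := by
    intro v
    rw [pi_norm_le_iff_of_nonneg hδ.le]
    intro j
    rcases eq_or_ne j k with rfl | hjk
    · rw [hwk, norm_zero]; exact hδ.le
    · obtain ⟨i, rfl⟩ := Fin.exists_succAbove_eq hjk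
      rw [hws, Real.norm_eq_abs, abs_of_nonneg (by positivity)]
      have h1 : ((v i : ℕ) : ℝ) ≤ (M:ℝ) - 1 := by
        have := (v i).isLt
        have : ((v i : ℕ) : ℝ) ≤ (M:ℝ) - 1 := by
          have h2 : ((v i : ℕ) : ℝ) + 1 ≤ (M:ℝ) := by exact_mod_cast (v i).isLt
          linarith
        exact this
      calc s * ((v i : ℕ) : ℝ) ≤ s * ((M:ℝ) - 1) := mul_le_mul_of_nonneg_left h1 hs.le
      _ ≤ δ := hM1
  -- endpoints in the cube with good values
  have hpin : ∀ v, (p + w v ∈ unitCube (d'+1)) ∧ f (p + w v) < a := by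
    intro v
    apply hp
    rw [dist_eq_norm, add_sub_cancel_left]
    exact (hwnorm v).trans (min_le_left _ _)
  have hqin : ∀ v, (q + w v ∈ unitCube (d'+1)) ∧ a < f (q + w v) := by
    intro v
    have := hq (q + w v) (by
      rw [dist_eq_norm, add_sub_cancel_left]
      exact (hwnorm v).trans (min_le_right _ _))
    exact ⟨this.1, by linarith [this.2, neg_lt_neg_iff.mp this.2]⟩
  -- IVT
  have hconv : ∀ v, ∀ t ∈ Set.Icc (0:ℝ) 1,
      (1 - t) • (p + w v) + t • (q + w v) ∈ unitCube (d'+1) := by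
    intro v t ht
    exact (convex_Icc (0 : Fin (d'+1) → ℝ) 1) (hpin v).1 (hqin v).1
      (by linarith [ht.2]) ht.1 (by ring)
  have hIVT : ∀ v, ∃ t, t ∈ Set.Icc (0:ℝ) 1 ∧
      f ((1 - t) • (p + w v) + t • (q + w v)) = a := by
    intro v
    set g : ℝ → (Fin (d'+1) → ℝ) := fun t => (1 - t) • (p + w v) + t • (q + w v) with hgdef
    have hgc : Continuous g := by
      rw [hgdef]
      exact ((continuous_const.sub continuous_id).smul continuous_const).add
        (continuous_id.smul continuous_const)
    have hgcont : ContinuousOn (f ∘ g) (Set.Icc 0 1) :=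
      hcont.comp hgc.continuousOn (fun t ht => hconv v t ht)
    have h0 : (f ∘ g) 0 ≤ a := by
      simp only [Function.comp_apply, hgdef, sub_zero, one_smul, zero_smul, add_zero]
      exact (hpin v).2.le
    have h1 : a ≤ (f ∘ g) 1 := by
      simp only [Function.comp_apply, hgdef, sub_self, one_smul, zero_smul, zero_add]
      exact (hqin v).2.le
    obtain ⟨t, ht, hta⟩ := intermediate_value_Icc (by norm_num : (0:ℝ) ≤ 1) hgcont ⟨h0, h1⟩
    exact ⟨t, ht, hta⟩
  choose t ht hta using hIVT
  set x : (Fin d' → Fin M) → (Fin (d'+1) → ℝ) :=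
    fun v => (1 - t v) • (p + w v) + t v • (q + w v) with hxdef
  have hxlevel : ∀ v, x v ∈ {y ∈ unitCube (d'+1) | f y = a} :=
    fun v => ⟨hconv v (t v) (ht v), hta v⟩
  -- separation
  have hxsep : ∀ v v', v ≠ v' → ε < dist (x v) (x v') := by
    intro v v' hvv'
    obtain ⟨i, hi⟩ := Function.ne_iff.mp hvv'
    set u : ℝ := t v - t v' with hudef
    have hdiff : x v - x v' = (w v - w v') + u • (q - p) := by
      simp only [hxdef, hudef]; module
    have hck : |u| * c ≤ dist (x v) (x v') := by
      have h1 : (x v - x v') k = u * (q k - p k) := by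
        rw [hdiff]
        simp only [Pi.add_apply, Pi.sub_apply, Pi.smul_apply, smul_eq_mul, hwk]
        ring
      calc |u| * c = |(x v - x v') k| := by rw [h1, abs_mul, hcdef]
      _ ≤ ‖x v - x v'‖ := by
          simpa [Real.norm_eq_abs] using norm_le_pi_norm (x v - x v') k
      _ = dist (x v) (x v') := (dist_eq_norm _ _).symm
    have hci : s - |u| * B ≤ dist (x v) (x v') := by
      set j := k.succAbove i with hjdef
      have h1 : (x v - x v') j =
          s * (((v i : ℕ) : ℝ) - ((v' i : ℕ) : ℝ)) + u * (q j - p j) := by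
        rw [hdiff]
        simp only [Pi.add_apply, Pi.sub_apply, Pi.smul_apply, smul_eq_mul, hjdef, hws]
        ring
      have h2 : s ≤ |s * (((v i : ℕ) : ℝ) - ((v' i : ℕ) : ℝ))| := by
        rw [abs_mul, abs_of_pos hs]
        have := nat_cast_sep (m := (v i : ℕ)) (n := (v' i : ℕ))
          (fun h => hi (Fin.ext h))
        nlinarith
      have h3 : |u * (q j - p j)| ≤ |u| * B := by
        rw [abs_mul]
        apply mul_le_mul_of_nonneg_left _ (abs_nonneg u)
        have h4 : dist (q j) (p j) ≤ dist q p := dist_le_pi_dist q p j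
        rw [Real.dist_eq] at h4
        rw [hBdef, dist_comm]
        exact h4
      have h5 : s - |u| * B ≤ |(x v - x v') j| := by
        rw [h1]
        have := abs_sub_abs_le_abs_sub (s * (((v i : ℕ) : ℝ) - ((v' i : ℕ) : ℝ)))
          (-(u * (q j - p j)))
        rw [abs_neg, sub_neg_eq_add] at this
        linarith
      calc s - |u| * B ≤ |(x v - x v') j| := h5
      _ ≤ ‖x v - x v'‖ := by
          simpa [Real.norm_eq_abs] using norm_le_pi_norm (x v - x v') j
      _ = dist (x v) (x v') := (dist_eq_norm _ _).symm
    exact sep_calc hε hc hB hcB hsc hck hci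
  -- conclude
  have hcard : Fintype.card (Fin d' → Fin M) = M ^ d' := by simp
  set e := Fintype.equivFinOfCardEq hcard with hedef
  have hmem : M ^ d' ∈ {kk : ℕ | ∃ xx : Fin kk → (Fin (d'+1) → ℝ),
      (∀ i, xx i ∈ {y ∈ unitCube (d'+1) | f y = a}) ∧
      ∀ i j, i ≠ j → ε < dist (xx i) (xx j)} :=
    ⟨fun i => x (e.symm i), fun i => hxlevel _,
      fun i j hij => hxsep _ _ (e.symm.injective.ne hij)⟩
  have hbdd := packing_bddAbove
    (E := {y ∈ unitCube (d'+1) | f y = a}) (fun y hy => hy.1) hε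
  have hle : (M ^ d' : ℕ) ≤ packingNumber {y ∈ unitCube (d'+1) | f y = a} ε :=
    le_csSup hbdd hmem
  calc (δ * c / (3 * B)) ^ d' * (1/ε) ^ d' ≤ (M:ℝ) ^ d' := harith
  _ = ((M ^ d' : ℕ) : ℝ) := by push_cast; ring
  _ ≤ (packingNumber {y ∈ unitCube (d'+1) | f y = a} ε : ℝ) := Nat.cast_le.mpr hle
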